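/- For 1 < r < 2 and s > 1 with sr < 2: define y_n = Σ_{k=1}^n 1/k^s and x_n = (y_{n−1}+y_n)/2. Then n^s·[ (1/(2(n+1)^s) + 1/n^s)^r − (1/(2(n+1)^s))^r ] is bounded below by C·n^{s−sr} for some constant C > 0 and all large n, and consequently Σ_n (y_n − y_{n−1}) · Σ_{k<n} C·k^{s−sr} = ∞. -/

import Mathlib

open Finset Real

lemma aux_superadd (a b p : ℝ) (ha : 0 ≤ a) (hb : 0 ≤ b) (hp : 1 ≤ p) :
    a ^ p + b ^ p ≤ (a + b) ^ p := by
  lift a to NNReal using ha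
  lift b to NNReal using hb
  rw [← NNReal.coe_add, ← NNReal.coe_rpow, ← NNReal.coe_rpow, ← NNReal.coe_rpow,
    ← NNReal.coe_add, NNReal.coe_le_coe]
  exact NNReal.add_rpow_le_rpow_add _ _ hp

/-- For `1 < r < 2` and `s > 1` with `sr < 2`: the slope increment estimate
`n^s ((1/(2(n+1)^s) + 1/n^s)^r - (1/(2(n+1)^s))^r) ≥ C n^{s - sr}` holds for some `C > 0`
and all large `n`, and consequently the series
`Σ_n (y_n - y_{n-1}) Σ_{k<n} C k^{s - sr}` diverges, where `y_n - y_{n-1} = 1/n^s`. -/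
theorem slope_estimate_and_divergence
    (r s : ℝ) (hr1 : 1 < r) (hr2 : r < 2) (hs : 1 < s) (hsr : s * r < 2) :
    ∃ C : ℝ, 0 < C ∧
      (∃ N : ℕ, 1 ≤ N ∧ ∀ n : ℕ, N ≤ n →
        C * (n : ℝ) ^ (s - s * r) ≤
          (n : ℝ) ^ s *
            ((1 / (2 * ((n : ℝ) + 1) ^ s) + 1 / (n : ℝ) ^ s) ^ r
              - (1 / (2 * ((n : ℝ) + 1) ^ s)) ^ r)) ∧
      ¬ Summable (fun n : ℕ =>
        (1 / ((n : ℝ) + 1) ^ s) * ∑ k ∈ range n, C * ((k : ℝ) + 1) ^ (s - s * r)) := by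
  refine ⟨1, one_pos, ⟨1, le_refl 1, fun n hn => ?_⟩, ?_⟩
  · -- slope estimate with C = 1
    have hn0 : (0 : ℝ) < n := by exact_mod_cast hn
    have hns : (0 : ℝ) < (n : ℝ) ^ s := rpow_pos_of_pos hn0 s
    have hn1s : (0 : ℝ) < ((n : ℝ) + 1) ^ s := rpow_pos_of_pos (by linarith) s
    set a : ℝ := 1 / (2 * ((n : ℝ) + 1) ^ s) with ha
    set b : ℝ := 1 / (n : ℝ) ^ s with hb
    have ha0 : 0 ≤ a := by positivity
    have hb0 : 0 ≤ b := by positivity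
    have key : a ^ r + b ^ r ≤ (a + b) ^ r := aux_superadd a b r ha0 hb0 hr1.le
    have hbr : b ^ r = (n : ℝ) ^ (-(s * r)) := by
      rw [hb, one_div, ← rpow_neg hn0.le, ← rpow_mul hn0.le, neg_mul]
    have : (1 : ℝ) * (n : ℝ) ^ (s - s * r) = (n : ℝ) ^ s * b ^ r := by
      rw [hbr, one_mul, ← rpow_add hn0, sub_eq_add_neg]
    rw [this]
    have : b ^ r ≤ (a + b) ^ r - a ^ r := by linarith
    exact mul_le_mul_of_nonneg_left this hns.le
  · -- divergence
    intro hsum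
    have ht : s - s * r < 0 := by nlinarith
    have h1 : ¬ (1 - s * r < -1) := by nlinarith
    have hdiv : ¬ Summable (fun n : ℕ => (n : ℝ) ^ (1 - s * r)) := by
      rw [Real.summable_nat_rpow]; exact h1
    apply hdiv
    have h2s : (0 : ℝ) < (2 : ℝ) ^ (-s) := rpow_pos_of_pos two_pos _
    have hsum2 : Summable (fun n : ℕ => (2 : ℝ) ^ (-s) * (n : ℝ) ^ (1 - s * r)) := by
      refine Summable.of_nonneg_of_le (fun n => by positivity) (fun n => ?_) hsum
      rcases Nat.eq_zero_or_pos n with h0 | hn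
      · subst h0
        simp [Real.zero_rpow (by nlinarith : 1 - s * r ≠ 0)]
      · have hn0 : (0 : ℝ) < n := by exact_mod_cast hn
        have hstep : (n : ℝ) ^ (1 + (s - s * r)) ≤ ∑ k ∈ range n, 1 * ((k : ℝ) + 1) ^ (s - s * r) := by
          have : ∀ k ∈ range n, (n : ℝ) ^ (s - s * r) ≤ 1 * ((k : ℝ) + 1) ^ (s - s * r) := by
            intro k hk
            rw [one_mul]
            have hk' : (k : ℝ) + 1 ≤ (n : ℝ) := by
              have := mem_range.mp hk; exact_mod_cast this
            exact rpow_le_rpow_of_nonpos (by positivity) hk' ht.le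
          calc (n : ℝ) ^ (1 + (s - s * r)) = (n : ℝ) * (n : ℝ) ^ (s - s * r) := by
                rw [rpow_add hn0, rpow_one]
            _ = ∑ _k ∈ range n, (n : ℝ) ^ (s - s * r) := by
                rw [Finset.sum_const, card_range, nsmul_eq_mul]
            _ ≤ _ := Finset.sum_le_sum this
        have hn1 : (1 : ℝ) ≤ (n : ℝ) := by exact_mod_cast hn
        have hfrac : (1 : ℝ) / (2 * (n : ℝ)) ^ s ≤ 1 / ((n : ℝ) + 1) ^ s := by
          apply one_div_le_one_div_of_le (rpow_pos_of_pos (by linarith) s)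
          exact rpow_le_rpow (by linarith) (by linarith) (by linarith)
        have hmain : (2 : ℝ) ^ (-s) * (n : ℝ) ^ (1 - s * r)
            = (1 / (2 * (n : ℝ)) ^ s) * (n : ℝ) ^ (1 + (s - s * r)) := by
          rw [mul_rpow (by norm_num) hn0.le, rpow_neg (by norm_num)]
          rw [rpow_add hn0]
          have hcomb : (n : ℝ) ^ (1:ℝ) * (n : ℝ) ^ (s - s * r)
              = (n : ℝ) ^ s * (n : ℝ) ^ (1 - s * r) := by
            rw [← rpow_add hn0, ← rpow_add hn0]; ring_nf
          rw [hcomb]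
          have hns : ((n:ℝ) ^ s) ≠ 0 := (rpow_pos_of_pos hn0 s).ne'
          have h2s' : ((2:ℝ) ^ s) ≠ 0 := (rpow_pos_of_pos two_pos s).ne'
          field_simp
        rw [hmain]
        have hsumpos : 0 ≤ ∑ k ∈ range n, 1 * ((k : ℝ) + 1) ^ (s - s * r) := by
          apply Finset.sum_nonneg; intro k _; positivity
        calc (1 / (2 * (n : ℝ)) ^ s) * (n : ℝ) ^ (1 + (s - s * r))
            ≤ (1 / ((n : ℝ) + 1) ^ s) * (n : ℝ) ^ (1 + (s - s * r)) := by
              apply mul_le_mul_of_nonneg_right hfrac (by positivity)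
          _ ≤ (1 / ((n : ℝ) + 1) ^ s) * ∑ k ∈ range n, 1 * ((k : ℝ) + 1) ^ (s - s * r) := by
              apply mul_le_mul_of_nonneg_left hstep (by positivity)
    have := hsum2.mul_left ((2 : ℝ) ^ s)
    convert this using 2 with n
    · rfl
    rw [← mul_assoc, ← rpow_add two_pos, add_neg_cancel, rpow_zero, one_mul]
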